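/- Let S = ⟨n₁, …, n_k⟩ with 2 ≤ n₁ < ⋯ < n_k minimally generating S and k ≥ 2. Then S is not fully elastic: there exists a rational q with 1 ≤ q < n_k/n₁ such that no nonzero n ∈ S has ρ(n) = q. -/

import Mathlib

/-- The set of factorization lengths of `n` over the generators `gens`. -/
def lenSet (k : ℕ) (gens : Fin k → ℕ) (n : ℕ) : Set ℕ :=
  {l | ∃ x : Fin k → ℕ, n = ∑ i, x i * gens i ∧ l = ∑ i, x i}

/-- The elasticity ρ(n) = L(n)/ℓ(n) of `n`, as a rational number. -/
noncomputable def rho (k : ℕ) (gens : Fin k → ℕ) (n : ℕ) : ℚ :=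
  ((sSup (lenSet k gens n) : ℕ) : ℚ) / ((sInf (lenSet k gens n) : ℕ) : ℚ)

lemma exists_fact (k : ℕ) (gens : Fin k → ℕ) (n : ℕ)
    (h : n ∈ AddSubmonoid.closure (Set.range gens)) :
    ∃ x : Fin k → ℕ, n = ∑ i, x i * gens i := by
  induction h using AddSubmonoid.closure_induction with
  | mem y hy =>
    obtain ⟨i, rfl⟩ := hy
    exact ⟨Pi.single i 1, by simp [Pi.single_apply, Finset.sum_ite_eq']⟩
  | zero => exact ⟨0, by simp⟩
  | add a b _ _ ha hb =>
    obtain ⟨x, hx⟩ := ha; obtain ⟨y, hy⟩ := hb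
    exact ⟨x + y, by simp [hx, hy, Pi.add_apply, add_mul, Finset.sum_add_distrib]⟩

lemma normalize_fact (k : ℕ) (gens : Fin k → ℕ) (j : Fin k) (hj : 0 < gens j) (x : Fin k → ℕ) :
    ∃ y : Fin k → ℕ, (∑ i, y i * gens i) = (∑ i, x i * gens i) ∧ ∀ i, i ≠ j → y i < gens j := by
  refine ⟨fun i => if i = j then x j + ∑ i ∈ Finset.univ.erase j, (x i / gens j) * gens i
    else x i % gens j, ?_, ?_⟩
  · rw [← Finset.add_sum_erase _ _ (Finset.mem_univ j),
        ← Finset.add_sum_erase _ (fun i => x i * gens i) (Finset.mem_univ j)]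
    simp only [if_pos rfl, if_true]
    rw [Finset.sum_congr rfl (fun i hi => by
      rw [if_neg (Finset.ne_of_mem_erase hi)] :
      ∀ i ∈ Finset.univ.erase j, (if i = j then x j + ∑ i ∈ Finset.univ.erase j,
        (x i / gens j) * gens i else x i % gens j) * gens i = (x i % gens j) * gens i)]
    rw [add_mul, Finset.sum_mul, add_assoc, ← Finset.sum_add_distrib]
    congr 1
    refine Finset.sum_congr rfl fun i _ => ?_
    nlinarith [Nat.mod_add_div (x i) (gens j)]
  · intro i hi
    simp only [if_neg hi]
    exact Nat.mod_lt _ hj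

/-- A minimally generated numerical semigroup S = ⟨n₁ < ⋯ < n_k⟩ with 2 ≤ n₁ and
k ≥ 2 is not fully elastic: some rational q ∈ [1, n_k/n₁) is not the elasticity of
any nonzero element of S. -/
theorem stmt_12 (k : ℕ) (hk : 2 ≤ k) (gens : Fin k → ℕ)
    (hmono : StrictMono gens) (h2 : 2 ≤ gens ⟨0, by omega⟩)
    (hmin : ∀ i, gens i ∉ AddSubmonoid.closure (Set.range gens \ {gens i})) :
    ∃ q : ℚ, 1 ≤ q ∧ q < (gens ⟨k - 1, by omega⟩ : ℚ) / (gens ⟨0, by omega⟩ : ℚ) ∧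
      ∀ n : ℕ, n ≠ 0 → n ∈ AddSubmonoid.closure (Set.range gens) →
        rho k gens n ≠ q := by
  have hk0 : 0 < k := by omega
  set i0 : Fin k := ⟨0, by omega⟩ with hi0
  set il : Fin k := ⟨k - 1, by omega⟩ with hil
  set n1 := gens i0 with hn1
  set nk := gens il with hnk
  have hle0 : ∀ i : Fin k, n1 ≤ gens i := fun i =>
    hmono.monotone (by simp [hi0, Fin.le_def])
  have hlel : ∀ i : Fin k, gens i ≤ nk := fun i =>
    hmono.monotone (by simp [hil, Fin.le_def]; omega)
  have h1k : n1 + 1 ≤ nk := by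
    have : i0 < il := by simp [hi0, hil, Fin.lt_def]; omega
    have := hmono this
    omega
  have hgpos : ∀ i : Fin k, 0 < gens i := fun i => lt_of_lt_of_le (by omega) (hle0 i)
  set D : ℕ := k * (nk * nk) with hD
  set b : ℕ := n1 + 2 * D + 1 with hb
  have hbpos : 0 < b := by omega
  refine ⟨((b:ℚ) + 1) / (b:ℚ), ?_, ?_, ?_⟩
  · rw [le_div_iff₀ (by positivity)]
    push_cast; linarith
  · rw [div_lt_div_iff₀ (by positivity) (by exact_mod_cast hgpos i0)]
    have : (b + 1) * n1 < nk * b := by nlinarith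
    push_cast
    exact_mod_cast this
  · intro n hn0 hmem hrho
    obtain ⟨x, hx⟩ := exists_fact k gens n hmem
    have hne : (lenSet k gens n).Nonempty := ⟨∑ i, x i, x, hx, rfl⟩
    -- every length l satisfies l * n1 ≤ n and n ≤ l * nk
    have hlow : ∀ l ∈ lenSet k gens n, l * n1 ≤ n := by
      rintro l ⟨z, hz, rfl⟩
      rw [hz, Finset.sum_mul]
      exact Finset.sum_le_sum fun i _ => Nat.mul_le_mul_left _ (hle0 i)
    have hhigh : ∀ l ∈ lenSet k gens n, n ≤ l * nk := by
      rintro l ⟨z, hz, rfl⟩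
      rw [hz, Finset.sum_mul]
      exact Finset.sum_le_sum fun i _ => Nat.mul_le_mul_left _ (hlel i)
    have hbdd : BddAbove (lenSet k gens n) := by
      refine ⟨n, fun l hl => ?_⟩
      have := hlow l hl
      nlinarith [hle0 i0]
    set A := sSup (lenSet k gens n) with hA
    set B := sInf (lenSet k gens n) with hB
    have hAmem : A ∈ lenSet k gens n := Nat.sSup_mem hne hbdd
    have hBmem : B ∈ lenSet k gens n := Nat.sInf_mem hne
    have hB1 : 1 ≤ B := by
      rcases Nat.eq_zero_or_pos B with h0 | h; swap; · exact h
      obtain ⟨z, hz, hzl⟩ := hBmem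
      rw [h0] at hzl
      have : ∀ i ∈ Finset.univ, z i = 0 :=
        (Finset.sum_eq_zero_iff).mp hzl.symm
      exfalso
      apply hn0
      rw [hz]
      exact Finset.sum_eq_zero fun i hi => by rw [this i hi, zero_mul]
    -- key upper bound: n ≤ A * n1 + D
    have key1 : n ≤ A * n1 + D := by
      obtain ⟨y, hy, hyb⟩ := normalize_fact k gens i0 (hgpos i0) x
      have hylen : (∑ i, y i) ∈ lenSet k gens n := ⟨y, by rw [hx, hy], rfl⟩
      have hyA : (∑ i, y i) ≤ A := le_csSup hbdd hylen
      have hsplit : n = y i0 * n1 + ∑ i ∈ Finset.univ.erase i0, y i * gens i := by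
        rw [hx, ← hy, ← Finset.add_sum_erase _ _ (Finset.mem_univ i0)]
      have hbound : ∑ i ∈ Finset.univ.erase i0, y i * gens i ≤ D := by
        calc ∑ i ∈ Finset.univ.erase i0, y i * gens i
            ≤ ∑ _i ∈ Finset.univ.erase i0, nk * nk := by
              refine Finset.sum_le_sum fun i hi => ?_
              have h1 := hyb i (Finset.ne_of_mem_erase hi)
              have h2 := hlel i
              have h3 := h1k
              nlinarith
          _ = (Finset.univ.erase i0).card * (nk * nk) := by
              rw [Finset.sum_const, smul_eq_mul]
          _ ≤ D := by
              have : (Finset.univ.erase i0).card ≤ k := by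
                calc (Finset.univ.erase i0).card ≤ (Finset.univ : Finset (Fin k)).card :=
                  Finset.card_le_card (Finset.erase_subset _ _)
                _ = k := by simp
              exact Nat.mul_le_mul_right _ this
      have hy0 : y i0 ≤ ∑ i, y i :=
        Finset.single_le_sum (fun i _ => Nat.zero_le _) (Finset.mem_univ i0)
      calc n = y i0 * n1 + ∑ i ∈ Finset.univ.erase i0, y i * gens i := hsplit
        _ ≤ (∑ i, y i) * n1 + D := by
            exact Nat.add_le_add (Nat.mul_le_mul_right _ hy0) hbound
        _ ≤ A * n1 + D := Nat.add_le_add_right (Nat.mul_le_mul_right _ hyA) _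
    -- key lower bound: B * nk ≤ n + D
    have key2 : B * nk ≤ n + D := by
      obtain ⟨y, hy, hyb⟩ := normalize_fact k gens il (hgpos il) x
      have hylen : (∑ i, y i) ∈ lenSet k gens n := ⟨y, by rw [hx, hy], rfl⟩
      have hyB : B ≤ (∑ i, y i) := Nat.sInf_le hylen
      have hyl : y il * nk ≤ n := by
        rw [hx, ← hy]
        exact Finset.single_le_sum (f := fun i => y i * gens i)
          (fun i _ => Nat.zero_le _) (Finset.mem_univ il)
      have hbound : ∑ i ∈ Finset.univ.erase il, y i * nk ≤ D := by
        calc ∑ i ∈ Finset.univ.erase il, y i * nk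
            ≤ ∑ _i ∈ Finset.univ.erase il, nk * nk := by
              refine Finset.sum_le_sum fun i hi => ?_
              have h1 := hyb i (Finset.ne_of_mem_erase hi)
              nlinarith
          _ = (Finset.univ.erase il).card * (nk * nk) := by
              rw [Finset.sum_const, smul_eq_mul]
          _ ≤ D := by
              have : (Finset.univ.erase il).card ≤ k := by
                calc (Finset.univ.erase il).card ≤ (Finset.univ : Finset (Fin k)).card :=
                  Finset.card_le_card (Finset.erase_subset _ _)
                _ = k := by simp
              exact Nat.mul_le_mul_right _ this
      calc B * nk ≤ (∑ i, y i) * nk := Nat.mul_le_mul_right _ hyB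
        _ = y il * nk + ∑ i ∈ Finset.univ.erase il, y i * nk := by
            rw [Finset.sum_mul, ← Finset.add_sum_erase _ (fun i => y i * nk)
              (Finset.mem_univ il)]
        _ ≤ n + D := Nat.add_le_add hyl hbound
    -- extract A * b = (b+1) * B from rho = (b+1)/b
    have hABeq : A * b = (b + 1) * B := by
      have hBne : ((B:ℚ)) ≠ 0 := by exact_mod_cast (by omega : B ≠ 0)
      have hbne : ((b:ℚ)) ≠ 0 := by exact_mod_cast (by omega : b ≠ 0)
      rw [rho, ← hA, ← hB, div_eq_div_iff hBne hbne] at hrho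
      have : (A:ℚ) * b = (b + 1) * B := by linarith [hrho]
      exact_mod_cast this
    have hdvd : b ∣ B := by
      have h1 : b ∣ (b + 1) * B := ⟨A, by linarith [hABeq]⟩
      have hco : Nat.Coprime b (b + 1) := by simp [Nat.Coprime]
      exact hco.dvd_of_dvd_mul_left h1
    obtain ⟨t, hBt⟩ := hdvd
    have ht1 : 1 ≤ t := by
      rcases Nat.eq_zero_or_pos t with h0 | h
      · subst h0; simp at hBt; omega
      · exact h
    have hAt : A = (b + 1) * t := by
      have : A * b = ((b + 1) * t) * b := by rw [hABeq, hBt]; ring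
      exact Nat.eq_of_mul_eq_mul_right hbpos this
    -- final contradiction
    rw [hBt] at key2
    rw [hAt] at key1
    nlinarith [key1, key2, h1k, ht1, hbpos]
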